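/- Let γ be a modular bridge from Ω_A to Ω_B. For any ω ∈ dom(D_M) and any l ≥ D_M(ω), the l-modular target set t_γ(ω|l) is a nonempty subset of N which is compact for the norm ‖·‖_N. -/

import Mathlib

open scoped ComplexOrder

noncomputable section

/-! ### Admissible functions -/

/-- A function `F : [0,∞)⁴ → [0,∞)` is admissible when it is nondecreasing in each argument
and dominates `x₁x₃ + x₂x₄`. -/
def Admissible (F : ℝ → ℝ → ℝ → ℝ → ℝ) : Prop :=
  (∀ x₁ x₂ x₃ x₄ y₁ y₂ y₃ y₄ : ℝ, 0 ≤ x₁ → 0 ≤ x₂ → 0 ≤ x₃ → 0 ≤ x₄ →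
      x₁ ≤ y₁ → x₂ ≤ y₂ → x₃ ≤ y₃ → x₄ ≤ y₄ → F x₁ x₂ x₃ x₄ ≤ F y₁ y₂ y₃ y₄) ∧
  (∀ x₁ x₂ x₃ x₄ : ℝ, 0 ≤ x₁ → 0 ≤ x₂ → 0 ≤ x₃ → 0 ≤ x₄ →
      x₁ * x₃ + x₂ * x₄ ≤ F x₁ x₂ x₃ x₄)

/-- An admissible triple `(F,G,H)`. -/
def AdmissibleTriple (F : ℝ → ℝ → ℝ → ℝ → ℝ) (G : ℝ → ℝ → ℝ → ℝ) (H : ℝ → ℝ → ℝ) : Prop :=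
  Admissible F ∧
  (∀ x y z x' y' z' : ℝ, 0 ≤ x → 0 ≤ y → 0 ≤ z → x ≤ x' → y ≤ y' → z ≤ z' →
      G x y z ≤ G x' y' z') ∧
  (∀ x y z : ℝ, 0 ≤ x → 0 ≤ y → 0 ≤ z → (x + y) * z ≤ G x y z) ∧
  (∀ x y x' y' : ℝ, 0 ≤ x → 0 ≤ y → x ≤ x' → y ≤ y' → H x y ≤ H x' y') ∧
  (∀ x y : ℝ, 0 ≤ x → 0 ≤ y → 2 * x * y ≤ H x y)

section ReIm

variable {A : Type*} [NormedRing A] [StarRing A] [NormedAlgebra ℂ A]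

/-- The real part `(a + a*)/2` of an element of a complex `*`-algebra. -/
def reEl (a : A) : A := (2⁻¹ : ℂ) • (a + star a)

/-- The imaginary part `(a - a*)/(2i)` of an element of a complex `*`-algebra. -/
def imEl (a : A) : A := ((2 * Complex.I)⁻¹ : ℂ) • (a - star a)

end ReIm

/-! ### States -/

/-- A state on a unital complex `*`-algebra: a linear functional which is unital
and positive. -/
structure CState (A : Type*) [NormedRing A] [StarRing A] [NormedAlgebra ℂ A] where
  toFun : A →ₗ[ℂ] ℂ
  map_one : toFun 1 = 1
  positive : ∀ a : A, 0 ≤ toFun (star a * a)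

/-- The topology induced by a distance function, generated by its open balls. -/
def ballTopology {X : Type*} (d : X → X → ℝ) : TopologicalSpace X :=
  TopologicalSpace.generateFrom {s | ∃ (x : X) (ε : ℝ), 0 < ε ∧ s = {y | d x y < ε}}

/-- The Hausdorff distance between two sets, relative to a distance function. -/
def hausDist {X : Type*} (d : X → X → ℝ) (S T : Set X) : ℝ :=
  max (sSup {r | ∃ x ∈ S, r = sInf {s | ∃ y ∈ T, s = d x y}})
      (sSup {r | ∃ y ∈ T, r = sInf {s | ∃ x ∈ S, s = d x y}})

/-- The diameter of a set relative to a distance function. -/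
def setDiam {X : Type*} (d : X → X → ℝ) (S : Set X) : ℝ :=
  sSup {r | ∃ x ∈ S, ∃ y ∈ S, r = d x y}

/-- The weak-* topology on the state space. -/
def stateWeakTopology (A : Type*) [NormedRing A] [StarRing A] [NormedAlgebra ℂ A] :
    TopologicalSpace (CState A) :=
  TopologicalSpace.induced (fun (φ : CState A) (a : A) => φ.toFun a) Pi.topologicalSpace

/-- The Monge-Kantorovich metric associated with a Lipschitz seminorm `L` with domain `dom`. -/
def mkDist {A : Type*} [NormedRing A] [StarRing A] [NormedAlgebra ℂ A]
    (dom : Set A) (L : A → ℝ) (φ ψ : CState A) : ℝ :=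
  sSup {r | ∃ a ∈ dom, L a ≤ 1 ∧ r = ‖φ.toFun a - ψ.toFun a‖}

/-- The 1-level set of a pivot is nonempty. -/
def pivotLevelNonempty {D : Type*} [NormedRing D] [StarRing D] [NormedAlgebra ℂ D]
    (x : D) : Prop :=
  ∃ φ : CState D,
    φ.toFun (star (1 - x) * (1 - x)) = 0 ∧ φ.toFun ((1 - x) * star (1 - x)) = 0

/-! ### Quasi-Leibniz quantum compact metric spaces -/

/-- An `F`-quasi-Leibniz quantum compact metric space structure on a unital C*-algebra `A`:
a Lipschitz seminorm `L` defined on a dense Jordan-Lie subalgebra `dom` of the self-adjoint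
part of `A`, vanishing exactly on `ℝ1`, lower semicontinuous, whose Monge-Kantorovich metric
metrizes the weak-* topology on the state space, and satisfying the `F`-quasi-Leibniz
inequality. -/
structure QLSpace (A : Type*) [NormedRing A] [StarRing A] [CStarRing A]
    [NormedAlgebra ℂ A] [StarModule ℂ A] [CompleteSpace A]
    (F : ℝ → ℝ → ℝ → ℝ → ℝ) where
  dom : Set A
  L : A → ℝ
  dom_selfAdjoint : ∀ a ∈ dom, IsSelfAdjoint a
  dom_dense : closure dom = {a : A | IsSelfAdjoint a}
  dom_add : ∀ a ∈ dom, ∀ b ∈ dom, a + b ∈ dom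
  dom_smul : ∀ (t : ℝ), ∀ a ∈ dom, (t : ℂ) • a ∈ dom
  dom_jordan : ∀ a ∈ dom, ∀ b ∈ dom, (2⁻¹ : ℂ) • (a * b + b * a) ∈ dom
  dom_lie : ∀ a ∈ dom, ∀ b ∈ dom, ((2 * Complex.I)⁻¹ : ℂ) • (a * b - b * a) ∈ dom
  one_mem : (1 : A) ∈ dom
  L_nonneg : ∀ a : A, 0 ≤ L a
  L_add : ∀ a ∈ dom, ∀ b ∈ dom, L (a + b) ≤ L a + L b
  L_smul : ∀ (t : ℝ), ∀ a ∈ dom, L ((t : ℂ) • a) = |t| * L a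
  L_eq_zero_iff : ∀ a ∈ dom, (L a = 0 ↔ ∃ t : ℝ, a = (t : ℂ) • (1 : A))
  lowerSemicontinuous : IsClosed {a : A | a ∈ dom ∧ L a ≤ 1}
  leibniz_jordan : ∀ a ∈ dom, ∀ b ∈ dom,
      L ((2⁻¹ : ℂ) • (a * b + b * a)) ≤ F ‖a‖ ‖b‖ (L a) (L b)
  leibniz_lie : ∀ a ∈ dom, ∀ b ∈ dom,
      L (((2 * Complex.I)⁻¹ : ℂ) • (a * b - b * a)) ≤ F ‖a‖ ‖b‖ (L a) (L b)
  mk_metrizes : ballTopology (mkDist dom L) = stateWeakTopology A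
/-! ### Metrized quantum vector bundles -/

/-- An `(F,G,H)`-metrized quantum vector bundle: a left Hilbert module `M` over a unital
C*-algebra `A` equipped with an `F`-quasi-Leibniz quantum compact metric space structure,
together with a D-norm `D` defined on a dense subspace `Ddom` of `M`, dominating the
C*-Hilbert norm, with compact unit ball, and satisfying the inner and modular quasi-Leibniz
inequalities with respect to `G` and `H`. -/
structure BundledMQVB (F : ℝ → ℝ → ℝ → ℝ → ℝ) (G : ℝ → ℝ → ℝ → ℝ) (H : ℝ → ℝ → ℝ) where
  A : Type
  [instRing : NormedRing A]
  [instStarRing : StarRing A]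
  [instCStar : CStarRing A]
  [instAlg : NormedAlgebra ℂ A]
  [instStarMod : StarModule ℂ A]
  [instComplete : CompleteSpace A]
  M : Type
  [instM : NormedAddCommGroup M]
  [instMC : Module ℂ M]
  [instMA : Module A M]
  [instTower : IsScalarTower ℂ A M]
  [instMComplete : CompleteSpace M]
  base : QLSpace A F
  inn : M → M → A
  Ddom : Set M
  D : M → ℝ
  inn_add_left : ∀ x y z : M, inn (x + y) z = inn x z + inn y z
  inn_smul_left : ∀ (a : A) (x y : M), inn (a • x) y = a * inn x y
  inn_smul_leftC : ∀ (c : ℂ) (x y : M), inn (c • x) y = c • inn x y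
  inn_star : ∀ x y : M, star (inn x y) = inn y x
  inn_pos : ∀ x : M, ∃ b : A, inn x x = star b * b
  inn_definite : ∀ x : M, inn x x = 0 → x = 0
  norm_eq : ∀ x : M, ‖x‖ = Real.sqrt ‖inn x x‖
  Ddom_dense : Dense Ddom
  Ddom_add : ∀ x ∈ Ddom, ∀ y ∈ Ddom, x + y ∈ Ddom
  Ddom_smul : ∀ (c : ℂ), ∀ x ∈ Ddom, c • x ∈ Ddom
  D_nonneg : ∀ x : M, 0 ≤ D x
  D_add : ∀ x ∈ Ddom, ∀ y ∈ Ddom, D (x + y) ≤ D x + D y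
  D_smul : ∀ (c : ℂ), ∀ x ∈ Ddom, D (c • x) = ‖c‖ * D x
  norm_le_D : ∀ x ∈ Ddom, ‖x‖ ≤ D x
  D_ball_compact : IsCompact {x : M | x ∈ Ddom ∧ D x ≤ 1}
  D_leibniz : ∀ a ∈ base.dom, ∀ x ∈ Ddom,
      a • x ∈ Ddom ∧ D (a • x) ≤ G ‖a‖ (base.L a) (D x)
  inn_leibniz : ∀ x ∈ Ddom, ∀ y ∈ Ddom,
      reEl (inn x y) ∈ base.dom ∧ imEl (inn x y) ∈ base.dom ∧
      base.L (reEl (inn x y)) ≤ H (D x) (D y) ∧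
      base.L (imEl (inn x y)) ≤ H (D x) (D y)

attribute [instance] BundledMQVB.instRing BundledMQVB.instStarRing BundledMQVB.instCStar
  BundledMQVB.instAlg BundledMQVB.instStarMod BundledMQVB.instComplete
  BundledMQVB.instM BundledMQVB.instMC BundledMQVB.instMA BundledMQVB.instTower
  BundledMQVB.instMComplete

variable {F : ℝ → ℝ → ℝ → ℝ → ℝ} {G : ℝ → ℝ → ℝ → ℝ} {H : ℝ → ℝ → ℝ}

/-- The closed ball of radius `r` for the D-norm of a metrized quantum vector bundle. -/
def BundledMQVB.Dball (Ω : BundledMQVB F G H) (r : ℝ) : Set Ω.M :=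
  {ω | ω ∈ Ω.Ddom ∧ Ω.D ω ≤ r}

/-- The modular Monge-Kantorovich metric of a metrized quantum vector bundle. -/
def BundledMQVB.mkD (Ω : BundledMQVB F G H) (x y : Ω.M) : ℝ :=
  sSup {r | ∃ ξ ∈ Ω.Ddom, Ω.D ξ ≤ 1 ∧ r = ‖Ω.inn x ξ - Ω.inn y ξ‖}

/-- The `A`-weak topology on the module of a metrized quantum vector bundle. -/
def BundledMQVB.aWeak (Ω : BundledMQVB F G H) : TopologicalSpace Ω.M :=
  TopologicalSpace.induced (fun (ω : Ω.M) (ξ : Ω.M) => Ω.inn ω ξ) Pi.topologicalSpace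
/-! ### Modular bridges -/

/-- A modular bridge between two metrized quantum vector bundles. -/
structure ModularBridge (ΩA ΩB : BundledMQVB F G H) where
  Dalg : Type
  [instDRing : NormedRing Dalg]
  [instDStarRing : StarRing Dalg]
  [instDCStar : CStarRing Dalg]
  [instDAlg : NormedAlgebra ℂ Dalg]
  [instDStarMod : StarModule ℂ Dalg]
  [instDComplete : CompleteSpace Dalg]
  J : Type
  [instJ : Nonempty J]
  pivot : Dalg
  piA : ΩA.A →⋆ₐ[ℂ] Dalg
  piB : ΩB.A →⋆ₐ[ℂ] Dalg
  piA_inj : Function.Injective piA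
  piB_inj : Function.Injective piB
  pivot_norm : ‖pivot‖ = 1
  levelSet_nonempty : pivotLevelNonempty pivot
  anchors : J → ΩA.M
  coanchors : J → ΩB.M
  anchors_mem : ∀ j, anchors j ∈ ΩA.Ddom
  anchors_le : ∀ j, ΩA.D (anchors j) ≤ 1
  coanchors_mem : ∀ j, coanchors j ∈ ΩB.Ddom
  coanchors_le : ∀ j, ΩB.D (coanchors j) ≤ 1

attribute [instance] ModularBridge.instDRing ModularBridge.instDStarRing
  ModularBridge.instDCStar ModularBridge.instDAlg ModularBridge.instDStarMod
  ModularBridge.instDComplete ModularBridge.instJ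

namespace ModularBridge

variable {ΩA ΩB : BundledMQVB F G H}

/-- The bridge seminorm of a modular bridge. -/
def bn (γ : ModularBridge ΩA ΩB) (a : ΩA.A) (b : ΩB.A) : ℝ :=
  ‖γ.piA a * γ.pivot - γ.pivot * γ.piB b‖

/-- The deck seminorm of a modular bridge. -/
def dn (γ : ModularBridge ΩA ΩB) (ω : ΩA.M) (η : ΩB.M) : ℝ :=
  ⨆ k : γ.J,
    max (γ.bn (ΩA.inn ω (γ.anchors k)) (ΩB.inn η (γ.coanchors k)))
        (γ.bn (ΩA.inn (γ.anchors k) ω) (ΩB.inn (γ.coanchors k) η))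

/-- The basic reach of a modular bridge. -/
def basicReach (γ : ModularBridge ΩA ΩB) : ℝ :=
  max
    (sSup {r | ∃ a ∈ ΩA.base.dom, ΩA.base.L a ≤ 1 ∧
        r = sInf {s | ∃ b ∈ ΩB.base.dom, ΩB.base.L b ≤ 1 ∧ s = γ.bn a b}})
    (sSup {r | ∃ b ∈ ΩB.base.dom, ΩB.base.L b ≤ 1 ∧
        r = sInf {s | ∃ a ∈ ΩA.base.dom, ΩA.base.L a ≤ 1 ∧ s = γ.bn a b}})

/-- The modular reach of a modular bridge. -/
def modularReach (γ : ModularBridge ΩA ΩB) : ℝ :=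
  ⨆ j : γ.J, γ.dn (γ.anchors j) (γ.coanchors j)

/-- The imprint of a modular bridge. -/
def imprint (γ : ModularBridge ΩA ΩB) : ℝ :=
  max (hausDist ΩA.mkD (Set.range γ.anchors) (ΩA.Dball 1))
      (hausDist ΩB.mkD (Set.range γ.coanchors) (ΩB.Dball 1))

/-- The reach of a modular bridge. -/
def reach (γ : ModularBridge ΩA ΩB) : ℝ :=
  max γ.basicReach (γ.modularReach + γ.imprint)

/-- The states of the bridge algebra in the 1-level set of the pivot. -/
def levelStates (γ : ModularBridge ΩA ΩB) : Set (CState γ.Dalg) :=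
  {φ | φ.toFun (star (1 - γ.pivot) * (1 - γ.pivot)) = 0 ∧
       φ.toFun ((1 - γ.pivot) * star (1 - γ.pivot)) = 0}

/-- The height of a modular bridge. -/
def height (γ : ModularBridge ΩA ΩB) : ℝ :=
  max
    (hausDist (mkDist ΩA.base.dom ΩA.base.L) (Set.univ : Set (CState ΩA.A))
      {ψ | ∃ φ ∈ γ.levelStates, ∀ a : ΩA.A, ψ.toFun a = φ.toFun (γ.piA a)})
    (hausDist (mkDist ΩB.base.dom ΩB.base.L) (Set.univ : Set (CState ΩB.A))
      {ψ | ∃ φ ∈ γ.levelStates, ∀ b : ΩB.A, ψ.toFun b = φ.toFun (γ.piB b)})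

/-- The length of a modular bridge. -/
def length (γ : ModularBridge ΩA ΩB) : ℝ := max γ.reach γ.height

/-- The `l`-modular target set of `ω` for a modular bridge. -/
def mtarget (γ : ModularBridge ΩA ΩB) (ω : ΩA.M) (l : ℝ) : Set ΩB.M :=
  {η | η ∈ ΩB.Ddom ∧ ΩB.D η ≤ l ∧ γ.dn ω η ≤ l * γ.reach}

/-- The `l`-target set of `a` for a modular bridge. -/
def atarget (γ : ModularBridge ΩA ΩB) (a : ΩA.A) (l : ℝ) : Set ΩB.A :=
  {b | b ∈ ΩB.base.dom ∧ ΩB.base.L b ≤ l ∧ γ.bn a b ≤ l * γ.basicReach}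

/-- The reverse of a modular bridge. -/
def reverse (γ : ModularBridge ΩA ΩB) : ModularBridge ΩB ΩA where
  Dalg := γ.Dalg
  J := γ.J
  pivot := star γ.pivot
  piA := γ.piB
  piB := γ.piA
  piA_inj := γ.piB_inj
  piB_inj := γ.piA_inj
  pivot_norm := by rw [norm_star]; exact γ.pivot_norm
  levelSet_nonempty := by
    obtain ⟨φ, h1, h2⟩ := γ.levelSet_nonempty
    refine ⟨φ, ?_, ?_⟩
    · have e1 : star ((1 : γ.Dalg) - star γ.pivot) = 1 - γ.pivot := by
        simp [star_sub]
      have e2 : (1 : γ.Dalg) - star γ.pivot = star (1 - γ.pivot) := by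
        simp [star_sub]
      rw [e1, e2]; exact h2
    · have e1 : star ((1 : γ.Dalg) - star γ.pivot) = 1 - γ.pivot := by
        simp [star_sub]
      have e2 : (1 : γ.Dalg) - star γ.pivot = star (1 - γ.pivot) := by
        simp [star_sub]
      rw [e1, e2]; exact h1
  anchors := γ.coanchors
  coanchors := γ.anchors
  anchors_mem := γ.coanchors_mem
  anchors_le := γ.coanchors_le
  coanchors_mem := γ.anchors_mem
  coanchors_le := γ.anchors_le

end ModularBridge

/-! ### Modular treks -/

/-- A modular trek: a finite chain of composable modular bridges. -/
inductive Trek (F : ℝ → ℝ → ℝ → ℝ → ℝ) (G : ℝ → ℝ → ℝ → ℝ) (H : ℝ → ℝ → ℝ) :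
    BundledMQVB F G H → BundledMQVB F G H → Type 1
  | single {ΩA ΩB : BundledMQVB F G H} (γ : ModularBridge ΩA ΩB) : Trek F G H ΩA ΩB
  | cons {ΩA ΩB ΩC : BundledMQVB F G H} (γ : ModularBridge ΩA ΩB)
      (Γ : Trek F G H ΩB ΩC) : Trek F G H ΩA ΩC

namespace Trek

/-- The length of a modular trek: the sum of the lengths of its bridges. -/
def length : ∀ {ΩA ΩB : BundledMQVB F G H}, Trek F G H ΩA ΩB → ℝ
  | _, _, .single γ => γ.length
  | _, _, .cons γ Γ => γ.length + Trek.length Γ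

/-- The modular target set of a modular trek (the set of endpoints of `l`-itineraries). -/
def mtarget : ∀ {ΩA ΩB : BundledMQVB F G H}, Trek F G H ΩA ΩB → ΩA.M → ℝ → Set ΩB.M
  | _, _, .single γ, ω, l => γ.mtarget ω l
  | _, _, .cons γ Γ, ω, l => {η | ∃ ξ ∈ γ.mtarget ω l, η ∈ Trek.mtarget Γ ξ l}

/-- The target set of a modular trek on the base algebras. -/
def atarget : ∀ {ΩA ΩB : BundledMQVB F G H}, Trek F G H ΩA ΩB → ΩA.A → ℝ → Set ΩB.A
  | _, _, .single γ, a, l => γ.atarget a l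
  | _, _, .cons γ Γ, a, l => {b | ∃ c ∈ γ.atarget a l, b ∈ Trek.atarget Γ c l}

end Trek


/-! ### Auxiliary lemmas for Statement 6 -/

section Statement6Aux

noncomputable instance (priority := 100) cstarAlgebraOfParts (A : Type*) [NormedRing A]
    [StarRing A] [CStarRing A] [NormedAlgebra ℂ A] [StarModule ℂ A] [CompleteSpace A] :
    CStarAlgebra A :=
  { ‹NormedRing A›, ‹StarRing A›, ‹CStarRing A›, ‹NormedAlgebra ℂ A›, ‹StarModule ℂ A›,
    ‹CompleteSpace A› with }

namespace BundledMQVB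

variable {F : ℝ → ℝ → ℝ → ℝ → ℝ} {G : ℝ → ℝ → ℝ → ℝ} {H : ℝ → ℝ → ℝ}
variable (Ω : BundledMQVB F G H)

lemma inn_zero_left (y : Ω.M) : Ω.inn 0 y = 0 := by
  have h := Ω.inn_add_left 0 0 y
  rw [add_zero] at h
  exact left_eq_add.mp h

lemma inn_zero_right (y : Ω.M) : Ω.inn y 0 = 0 := by
  rw [← Ω.inn_star, Ω.inn_zero_left, star_zero]

lemma inn_sub_left (x y z : Ω.M) : Ω.inn (x - y) z = Ω.inn x z - Ω.inn y z := by
  have h := Ω.inn_add_left (x - y) y z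
  rw [sub_add_cancel] at h
  exact eq_sub_of_add_eq h.symm

lemma inn_sub_right (x y z : Ω.M) : Ω.inn z (x - y) = Ω.inn z x - Ω.inn z y := by
  rw [← Ω.inn_star, Ω.inn_sub_left, star_sub, Ω.inn_star, Ω.inn_star]

lemma inn_smulC_right (c : ℂ) (x y : Ω.M) :
    Ω.inn y (c • x) = (starRingEnd ℂ) c • Ω.inn y x := by
  rw [← Ω.inn_star, Ω.inn_smul_leftC, star_smul, Ω.inn_star]
  rfl

lemma inn_smulA_right (a : Ω.A) (x y : Ω.M) :
    Ω.inn y (a • x) = Ω.inn y x * star a := by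
  rw [← Ω.inn_star, Ω.inn_smul_left, star_mul, Ω.inn_star]

lemma norm_inn_self (x : Ω.M) : ‖Ω.inn x x‖ = ‖x‖ ^ 2 := by
  rw [Ω.norm_eq x, Real.sq_sqrt (norm_nonneg _)]

lemma norm_inn_le (x y : Ω.M) : ‖Ω.inn x y‖ ≤ ‖x‖ * ‖y‖ := by
  by_cases hx : x = 0
  · subst hx
    rw [Ω.inn_zero_left]
    simp only [norm_zero]
    positivity
  · letI : PartialOrder Ω.A := CStarAlgebra.spectralOrder _
    haveI : StarOrderedRing Ω.A := CStarAlgebra.spectralOrderedRing _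
    have hpos : ∀ z : Ω.M, (0 : Ω.A) ≤ Ω.inn z z := fun z => by
      obtain ⟨b, hb⟩ := Ω.inn_pos z; rw [hb]; exact star_mul_self_nonneg b
    have hnx : ‖x‖ ≠ 0 := fun h => hx (norm_eq_zero.mp h)
    have hc0 : (0:ℝ) < ‖x‖ ^ 2 := by positivity
    set c : ℝ := ‖x‖ ^ 2 with hcdef
    set a : Ω.A := Ω.inn y x with ha
    set q : Ω.A := Ω.inn y x * Ω.inn x y with hq
    have hstar_a : star a = Ω.inn x y := Ω.inn_star y x
    have hq_eq : a * star a = q := by rw [hstar_a, hq]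
    have hv := hpos (((c:ℝ) : ℂ) • y - a • x)
    have e1 : Ω.inn y (((c:ℝ):ℂ) • y) = ((c:ℝ):ℂ) • Ω.inn y y := by
      rw [Ω.inn_smulC_right, Complex.conj_ofReal]
    have e2 : Ω.inn y (a • x) = q := by
      rw [Ω.inn_smulA_right, ← ha]
      exact hq_eq
    have e3 : Ω.inn x (((c:ℝ):ℂ) • y) = ((c:ℝ):ℂ) • Ω.inn x y := by
      rw [Ω.inn_smulC_right, Complex.conj_ofReal]
    have e4 : Ω.inn x (a • x) = Ω.inn x x * star a := Ω.inn_smulA_right a x x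
    have hexp : Ω.inn (((c:ℝ) : ℂ) • y - a • x) (((c:ℝ) : ℂ) • y - a • x)
        = c • (c • Ω.inn y y) - c • q - c • q + a * Ω.inn x x * star a := by
      rw [Ω.inn_sub_left, Ω.inn_smul_leftC, Ω.inn_smul_left,
        Ω.inn_sub_right, Ω.inn_sub_right, e1, e2, e3, e4]
      have e5 : a * (((c:ℝ):ℂ) • Ω.inn x y - Ω.inn x x * star a)
          = ((c:ℝ):ℂ) • q - a * Ω.inn x x * star a := by
        rw [mul_sub, mul_smul_comm, ← hstar_a, hq_eq, mul_assoc]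
      rw [e5, smul_sub, Complex.coe_smul, Complex.coe_smul, Complex.coe_smul, smul_smul]
      rw [← smul_smul]
      abel
    rw [hexp] at hv
    have h2 : a * Ω.inn x x * star a ≤ c • q := by
      have := CStarAlgebra.star_right_conjugate_le_norm_smul (a := a) (b := Ω.inn x x)
        (Ω.inn_star x x)
      rwa [Ω.norm_inn_self, ← hcdef, hq_eq] at this
    have h3 : (0 : Ω.A) ≤ c • (c • Ω.inn y y) - c • q := by
      calc (0 : Ω.A) ≤ c • (c • Ω.inn y y) - c • q - c • q + a * Ω.inn x x * star a := hv
        _ ≤ c • (c • Ω.inn y y) - c • q - c • q + c • q := add_le_add_right h2 _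
        _ = c • (c • Ω.inn y y) - c • q := by abel
    have h5 : q ≤ c • Ω.inn y y :=
      (smul_le_smul_iff_of_pos_left hc0).mp (sub_nonneg.mp h3)
    have hq0 : (0 : Ω.A) ≤ q := by
      rw [hq, ← Ω.inn_star x y]; exact star_mul_self_nonneg _
    have h6 : ‖q‖ ≤ ‖c • Ω.inn y y‖ := CStarAlgebra.norm_le_norm_of_nonneg_of_le hq0 h5
    have hqnorm : ‖q‖ = ‖Ω.inn x y‖ * ‖Ω.inn x y‖ := by
      rw [hq, ← Ω.inn_star x y]; exact CStarRing.norm_star_mul_self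
    have hrhs : ‖c • Ω.inn y y‖ = c * ‖y‖ ^ 2 := by
      rw [norm_smul, Ω.norm_inn_self, Real.norm_eq_abs, abs_of_pos hc0]
    rw [hqnorm, hrhs] at h6
    nlinarith [norm_nonneg (Ω.inn x y), mul_nonneg (norm_nonneg x) (norm_nonneg y),
      norm_nonneg x, norm_nonneg y]

lemma normM_smul (c : ℂ) (x : Ω.M) : ‖c • x‖ = ‖c‖ * ‖x‖ := by
  have h : Ω.inn (c • x) (c • x) = (c * (starRingEnd ℂ) c) • Ω.inn x x := by
    rw [Ω.inn_smul_leftC, Ω.inn_smulC_right, smul_smul]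
  have h2 : c * (starRingEnd ℂ) c = ((‖c‖ ^ 2 : ℝ) : ℂ) := by
    rw [Complex.mul_conj']
    norm_cast
  have h3 : ‖Ω.inn (c • x) (c • x)‖ = ‖c‖ ^ 2 * ‖Ω.inn x x‖ := by
    rw [h, h2, Complex.coe_smul, norm_smul, Real.norm_eq_abs,
      abs_of_nonneg (by positivity)]
  rw [Ω.norm_eq (c • x), h3, Real.sqrt_mul (by positivity) _,
    Real.sqrt_sq (norm_nonneg c), ← Ω.norm_eq x]

/-- The inner product with a fixed vector, as a continuous linear map. -/
noncomputable def innCLM (ξ : Ω.M) : Ω.M →L[ℂ] Ω.A :=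
  LinearMap.mkContinuous
    { toFun := fun η => Ω.inn η ξ
      map_add' := fun u v => Ω.inn_add_left u v ξ
      map_smul' := fun d u => Ω.inn_smul_leftC d u ξ }
    ‖ξ‖ (fun η => by rw [mul_comm]; exact Ω.norm_inn_le η ξ)

lemma continuous_inn_right (ξ : Ω.M) : Continuous fun η : Ω.M => Ω.inn η ξ :=
  (Ω.innCLM ξ).continuous

lemma continuous_inn_left (ξ : Ω.M) : Continuous fun η : Ω.M => Ω.inn ξ η := by
  have h : (fun η : Ω.M => Ω.inn ξ η) = fun η : Ω.M => star (Ω.inn η ξ) :=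
    funext fun η => (Ω.inn_star η ξ).symm
  rw [h]
  exact continuous_star.comp (Ω.continuous_inn_right ξ)

lemma continuous_csmul (c : ℂ) : Continuous fun x : Ω.M => c • x := by
  have := (LinearMap.mkContinuous (c • (LinearMap.id : Ω.M →ₗ[ℂ] Ω.M)) ‖c‖
    (fun x => by
      simp only [LinearMap.smul_apply, LinearMap.id_coe, id_eq]
      rw [Ω.normM_smul])).continuous
  exact this

lemma zero_mem_Ddom : (0 : Ω.M) ∈ Ω.Ddom := by
  obtain ⟨x, hx⟩ := Ω.Ddom_dense.nonempty
  have h := Ω.Ddom_smul 0 x hx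
  rwa [zero_smul] at h

lemma D_zero : Ω.D 0 = 0 := by
  obtain ⟨x, hx⟩ := Ω.Ddom_dense.nonempty
  have h := Ω.D_smul 0 x hx
  rwa [zero_smul, norm_zero, zero_mul] at h

lemma Dball_compact {l : ℝ} (hl : 0 < l) : IsCompact (Ω.Dball l) := by
  have himg : Ω.Dball l = (fun x : Ω.M => ((l : ℝ) : ℂ) • x) '' Ω.Dball 1 := by
    ext η
    constructor
    · rintro ⟨hmem, hD⟩
      refine ⟨((l⁻¹ : ℝ) : ℂ) • η, ⟨Ω.Ddom_smul _ _ hmem, ?_⟩, ?_⟩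
      · rw [Ω.D_smul _ _ hmem, Complex.norm_real, Real.norm_eq_abs,
          abs_of_pos (inv_pos.mpr hl)]
        calc l⁻¹ * Ω.D η ≤ l⁻¹ * l :=
              mul_le_mul_of_nonneg_left hD (inv_nonneg.mpr hl.le)
          _ = 1 := inv_mul_cancel₀ hl.ne'
      · show ((l : ℝ) : ℂ) • (((l⁻¹ : ℝ) : ℂ) • η) = η
        rw [smul_smul, ← Complex.ofReal_mul, mul_inv_cancel₀ hl.ne',
          Complex.ofReal_one, one_smul]
    · rintro ⟨x, ⟨hmem, hD⟩, rfl⟩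
      refine ⟨Ω.Ddom_smul _ _ hmem, ?_⟩
      rw [Ω.D_smul _ _ hmem, Complex.norm_real, Real.norm_eq_abs, abs_of_pos hl]
      calc l * Ω.D x ≤ l * 1 := mul_le_mul_of_nonneg_left hD hl.le
        _ = l := mul_one l
  rw [himg]
  exact Ω.D_ball_compact.image (Ω.continuous_csmul _)

lemma mkD_mem_bound (x y : Ω.M) :
    ∀ r ∈ {r : ℝ | ∃ ξ ∈ Ω.Ddom, Ω.D ξ ≤ 1 ∧ r = ‖Ω.inn x ξ - Ω.inn y ξ‖},
      r ≤ ‖x - y‖ := by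
  rintro r ⟨ξ, hξ, hD, rfl⟩
  rw [← Ω.inn_sub_left]
  calc ‖Ω.inn (x - y) ξ‖ ≤ ‖x - y‖ * ‖ξ‖ := Ω.norm_inn_le _ _
    _ ≤ ‖x - y‖ * 1 := mul_le_mul_of_nonneg_left
        ((Ω.norm_le_D ξ hξ).trans hD) (norm_nonneg _)
    _ = ‖x - y‖ := mul_one _

lemma mkD_set_nonempty (x y : Ω.M) :
    {r : ℝ | ∃ ξ ∈ Ω.Ddom, Ω.D ξ ≤ 1 ∧ r = ‖Ω.inn x ξ - Ω.inn y ξ‖}.Nonempty :=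
  ⟨_, ⟨0, Ω.zero_mem_Ddom, by rw [Ω.D_zero]; exact zero_le_one, rfl⟩⟩

lemma mkD_bddAbove (x y : Ω.M) :
    BddAbove {r : ℝ | ∃ ξ ∈ Ω.Ddom, Ω.D ξ ≤ 1 ∧ r = ‖Ω.inn x ξ - Ω.inn y ξ‖} :=
  ⟨‖x - y‖, fun r hr => Ω.mkD_mem_bound x y r hr⟩

lemma mkD_le_norm (x y : Ω.M) : Ω.mkD x y ≤ ‖x - y‖ :=
  csSup_le (Ω.mkD_set_nonempty x y) (Ω.mkD_mem_bound x y)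

lemma le_mkD (x y ξ : Ω.M) (hξ : ξ ∈ Ω.Ddom) (hD : Ω.D ξ ≤ 1) :
    ‖Ω.inn x ξ - Ω.inn y ξ‖ ≤ Ω.mkD x y :=
  le_csSup (Ω.mkD_bddAbove x y) ⟨ξ, hξ, hD, rfl⟩

lemma mkD_nonneg (x y : Ω.M) : 0 ≤ Ω.mkD x y := by
  have h := Ω.le_mkD x y 0 Ω.zero_mem_Ddom (by rw [Ω.D_zero]; exact zero_le_one)
  exact (norm_nonneg _).trans h

end BundledMQVB

end Statement6Aux

section Statement6Bridge

variable {F : ℝ → ℝ → ℝ → ℝ → ℝ} {G : ℝ → ℝ → ℝ → ℝ} {H : ℝ → ℝ → ℝ}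

namespace ModularBridge

variable {ΩA ΩB : BundledMQVB F G H} (γ : ModularBridge ΩA ΩB)

lemma norm_piA (a : ΩA.A) : ‖γ.piA a‖ = ‖a‖ :=
  NonUnitalStarAlgHom.norm_map γ.piA γ.piA_inj a

lemma norm_piB (b : ΩB.A) : ‖γ.piB b‖ = ‖b‖ :=
  NonUnitalStarAlgHom.norm_map γ.piB γ.piB_inj b

lemma bn_def (a : ΩA.A) (b : ΩB.A) :
    γ.bn a b = ‖γ.piA a * γ.pivot - γ.pivot * γ.piB b‖ := rfl

lemma norm_piA_mul_pivot (a : ΩA.A) : ‖γ.piA a * γ.pivot‖ ≤ ‖a‖ := by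
  calc ‖γ.piA a * γ.pivot‖ ≤ ‖γ.piA a‖ * ‖γ.pivot‖ := norm_mul_le _ _
    _ = ‖a‖ := by rw [γ.pivot_norm, mul_one, γ.norm_piA]

lemma norm_pivot_mul_piB (b : ΩB.A) : ‖γ.pivot * γ.piB b‖ ≤ ‖b‖ := by
  calc ‖γ.pivot * γ.piB b‖ ≤ ‖γ.pivot‖ * ‖γ.piB b‖ := norm_mul_le _ _
    _ = ‖b‖ := by rw [γ.pivot_norm, one_mul, γ.norm_piB]

lemma bn_le (a : ΩA.A) (b : ΩB.A) : γ.bn a b ≤ ‖a‖ + ‖b‖ := by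
  rw [γ.bn_def]
  calc ‖γ.piA a * γ.pivot - γ.pivot * γ.piB b‖
      ≤ ‖γ.piA a * γ.pivot‖ + ‖γ.pivot * γ.piB b‖ := norm_sub_le _ _
    _ ≤ ‖a‖ + ‖b‖ := add_le_add (γ.norm_piA_mul_pivot a) (γ.norm_pivot_mul_piB b)

lemma bn_add_left (a₁ a₂ : ΩA.A) (b : ΩB.A) :
    γ.bn (a₁ + a₂) b ≤ ‖a₁‖ + γ.bn a₂ b := by
  rw [γ.bn_def, γ.bn_def]
  have h : γ.piA (a₁ + a₂) * γ.pivot - γ.pivot * γ.piB b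
      = γ.piA a₁ * γ.pivot + (γ.piA a₂ * γ.pivot - γ.pivot * γ.piB b) := by
    rw [map_add, add_mul]; abel
  rw [h]
  calc ‖γ.piA a₁ * γ.pivot + (γ.piA a₂ * γ.pivot - γ.pivot * γ.piB b)‖
      ≤ ‖γ.piA a₁ * γ.pivot‖ + ‖γ.piA a₂ * γ.pivot - γ.pivot * γ.piB b‖ := norm_add_le _ _
    _ ≤ ‖a₁‖ + ‖γ.piA a₂ * γ.pivot - γ.pivot * γ.piB b‖ :=
        add_le_add_left (γ.norm_piA_mul_pivot a₁) _
  
lemma bn_smul (c : ℝ) (hc : 0 ≤ c) (a : ΩA.A) (b : ΩB.A) :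
    γ.bn (((c : ℝ) : ℂ) • a) (((c : ℝ) : ℂ) • b) = c * γ.bn a b := by
  rw [γ.bn_def, γ.bn_def, map_smul, map_smul, smul_mul_assoc, mul_smul_comm,
    ← smul_sub, norm_smul, Complex.norm_real, Real.norm_eq_abs, abs_of_nonneg hc]

lemma dn_eq (ω : ΩA.M) (η : ΩB.M) :
    γ.dn ω η = ⨆ k : γ.J,
      max (γ.bn (ΩA.inn ω (γ.anchors k)) (ΩB.inn η (γ.coanchors k)))
        (γ.bn (ΩA.inn (γ.anchors k) ω) (ΩB.inn (γ.coanchors k) η)) := rfl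

lemma dn_term_le (ω : ΩA.M) (η : ΩB.M) (k : γ.J) :
    max (γ.bn (ΩA.inn ω (γ.anchors k)) (ΩB.inn η (γ.coanchors k)))
      (γ.bn (ΩA.inn (γ.anchors k) ω) (ΩB.inn (γ.coanchors k) η)) ≤ ‖ω‖ + ‖η‖ := by
  have hak : ‖γ.anchors k‖ ≤ 1 :=
    (ΩA.norm_le_D _ (γ.anchors_mem k)).trans (γ.anchors_le k)
  have hck : ‖γ.coanchors k‖ ≤ 1 :=
    (ΩB.norm_le_D _ (γ.coanchors_mem k)).trans (γ.coanchors_le k)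
  refine max_le ?_ ?_
  · refine (γ.bn_le _ _).trans (add_le_add ?_ ?_)
    · calc ‖ΩA.inn ω (γ.anchors k)‖ ≤ ‖ω‖ * ‖γ.anchors k‖ := ΩA.norm_inn_le _ _
        _ ≤ ‖ω‖ * 1 := mul_le_mul_of_nonneg_left hak (norm_nonneg ω)
        _ = ‖ω‖ := mul_one _
    · calc ‖ΩB.inn η (γ.coanchors k)‖ ≤ ‖η‖ * ‖γ.coanchors k‖ := ΩB.norm_inn_le _ _
        _ ≤ ‖η‖ * 1 := mul_le_mul_of_nonneg_left hck (norm_nonneg η)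
        _ = ‖η‖ := mul_one _
  · refine (γ.bn_le _ _).trans (add_le_add ?_ ?_)
    · calc ‖ΩA.inn (γ.anchors k) ω‖ ≤ ‖γ.anchors k‖ * ‖ω‖ := ΩA.norm_inn_le _ _
        _ ≤ 1 * ‖ω‖ := mul_le_mul_of_nonneg_right hak (norm_nonneg ω)
        _ = ‖ω‖ := one_mul _
    · calc ‖ΩB.inn (γ.coanchors k) η‖ ≤ ‖γ.coanchors k‖ * ‖η‖ := ΩB.norm_inn_le _ _
        _ ≤ 1 * ‖η‖ := mul_le_mul_of_nonneg_right hck (norm_nonneg η)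
        _ = ‖η‖ := one_mul _

lemma dn_bdd (ω : ΩA.M) (η : ΩB.M) :
    BddAbove (Set.range fun k : γ.J =>
      max (γ.bn (ΩA.inn ω (γ.anchors k)) (ΩB.inn η (γ.coanchors k)))
        (γ.bn (ΩA.inn (γ.anchors k) ω) (ΩB.inn (γ.coanchors k) η))) :=
  ⟨‖ω‖ + ‖η‖, by rintro r ⟨k, rfl⟩; exact γ.dn_term_le ω η k⟩

lemma term_le_dn (ω : ΩA.M) (η : ΩB.M) (k : γ.J) :
    max (γ.bn (ΩA.inn ω (γ.anchors k)) (ΩB.inn η (γ.coanchors k)))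
      (γ.bn (ΩA.inn (γ.anchors k) ω) (ΩB.inn (γ.coanchors k) η)) ≤ γ.dn ω η := by
  rw [γ.dn_eq]
  exact le_ciSup (γ.dn_bdd ω η) k

lemma dn_le_sum (ω : ΩA.M) (η : ΩB.M) : γ.dn ω η ≤ ‖ω‖ + ‖η‖ := by
  rw [γ.dn_eq]
  exact ciSup_le (γ.dn_term_le ω η)

lemma dn_anchor_le_mr (j : γ.J) :
    γ.dn (γ.anchors j) (γ.coanchors j) ≤ γ.modularReach := by
  have hbdd : BddAbove (Set.range fun j' : γ.J =>
      γ.dn (γ.anchors j') (γ.coanchors j')) := by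
    refine ⟨2, ?_⟩
    rintro r ⟨j', rfl⟩
    refine (γ.dn_le_sum _ _).trans ?_
    have h1 : ‖γ.anchors j'‖ ≤ 1 :=
      (ΩA.norm_le_D _ (γ.anchors_mem j')).trans (γ.anchors_le j')
    have h2 : ‖γ.coanchors j'‖ ≤ 1 :=
      (ΩB.norm_le_D _ (γ.coanchors_mem j')).trans (γ.coanchors_le j')
    linarith
  exact le_ciSup hbdd j

lemma dn_closed (ω : ΩA.M) (c : ℝ) : IsClosed {η : ΩB.M | γ.dn ω η ≤ c} := by
  have hset : {η : ΩB.M | γ.dn ω η ≤ c} = ⋂ k : γ.J,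
      {η : ΩB.M | max (γ.bn (ΩA.inn ω (γ.anchors k)) (ΩB.inn η (γ.coanchors k)))
        (γ.bn (ΩA.inn (γ.anchors k) ω) (ΩB.inn (γ.coanchors k) η)) ≤ c} := by
    ext η
    simp only [Set.mem_setOf_eq, Set.mem_iInter]
    constructor
    · intro h k
      exact (γ.term_le_dn ω η k).trans h
    · intro h
      rw [γ.dn_eq]
      exact ciSup_le h
  rw [hset]
  refine isClosed_iInter fun k => ?_
  have hpB : Continuous γ.piB :=
    (NonUnitalStarAlgHom.isometry γ.piB γ.piB_inj).continuous
  have hc1 : Continuous fun η : ΩB.M =>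
      γ.bn (ΩA.inn ω (γ.anchors k)) (ΩB.inn η (γ.coanchors k)) := by
    simp only [bn_def]
    exact (continuous_const.sub (continuous_const.mul
      (hpB.comp (ΩB.continuous_inn_right (γ.coanchors k))))).norm
  have hc2 : Continuous fun η : ΩB.M =>
      γ.bn (ΩA.inn (γ.anchors k) ω) (ΩB.inn (γ.coanchors k) η) := by
    simp only [bn_def]
    exact (continuous_const.sub (continuous_const.mul
      (hpB.comp (ΩB.continuous_inn_left (γ.coanchors k))))).norm
  exact isClosed_le (hc1.max hc2) continuous_const

lemma approx (ω : ΩA.M) (hω : ω ∈ ΩA.Ddom) {l : ℝ} (hl0 : 0 < l)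
    (hl : ΩA.D ω ≤ l) {ε : ℝ} (hε : 0 < ε) :
    ∃ η ∈ ΩB.Ddom, ΩB.D η ≤ l ∧ γ.dn ω η ≤ l * γ.reach + l * ε := by
  classical
  set ω' : ΩA.M := ((l⁻¹ : ℝ) : ℂ) • ω with hω'
  have hω'mem : ω' ∈ ΩA.Ddom := ΩA.Ddom_smul _ ω hω
  have hω'D : ΩA.D ω' ≤ 1 := by
    rw [hω', ΩA.D_smul _ ω hω, Complex.norm_real, Real.norm_eq_abs,
      abs_of_pos (inv_pos.mpr hl0)]
    calc l⁻¹ * ΩA.D ω ≤ l⁻¹ * l := mul_le_mul_of_nonneg_left hl (inv_nonneg.mpr hl0.le)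
      _ = 1 := inv_mul_cancel₀ hl0.ne'
  have hωeq : ((l : ℝ) : ℂ) • ω' = ω := by
    rw [hω', smul_smul, ← Complex.ofReal_mul, mul_inv_cancel₀ hl0.ne',
      Complex.ofReal_one, one_smul]
  -- choose a good anchor
  set T : Set ℝ := {s | ∃ x ∈ Set.range γ.anchors, s = ΩA.mkD x ω'} with hT
  have hTne : T.Nonempty :=
    ⟨_, ⟨γ.anchors (Classical.arbitrary γ.J), ⟨Classical.arbitrary γ.J, rfl⟩, rfl⟩⟩
  have hTinf_le : sInf T ≤ γ.imprint := by
    have hbdd : BddAbove {r : ℝ | ∃ y ∈ ΩA.Dball 1,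
        r = sInf {s | ∃ x ∈ Set.range γ.anchors, s = ΩA.mkD x y}} := by
      refine ⟨2, ?_⟩
      rintro r ⟨y, hy, rfl⟩
      set j₀ := Classical.arbitrary γ.J
      have hmem : ΩA.mkD (γ.anchors j₀) y ∈
          {s | ∃ x ∈ Set.range γ.anchors, s = ΩA.mkD x y} := ⟨_, ⟨j₀, rfl⟩, rfl⟩
      have hbl : BddBelow {s | ∃ x ∈ Set.range γ.anchors, s = ΩA.mkD x y} := by
        refine ⟨0, ?_⟩
        rintro s ⟨x, _, rfl⟩
        exact ΩA.mkD_nonneg x y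
      refine (csInf_le hbl hmem).trans ?_
      refine (ΩA.mkD_le_norm _ _).trans ?_
      have h1 : ‖γ.anchors j₀‖ ≤ 1 :=
        (ΩA.norm_le_D _ (γ.anchors_mem j₀)).trans (γ.anchors_le j₀)
      have h2 : ‖y‖ ≤ 1 := (ΩA.norm_le_D _ hy.1).trans hy.2
      calc ‖γ.anchors j₀ - y‖ ≤ ‖γ.anchors j₀‖ + ‖y‖ := norm_sub_le _ _
        _ ≤ 2 := by linarith
    have hmem2 : sInf T ∈ {r : ℝ | ∃ y ∈ ΩA.Dball 1,
        r = sInf {s | ∃ x ∈ Set.range γ.anchors, s = ΩA.mkD x y}} :=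
      ⟨ω', ⟨hω'mem, hω'D⟩, rfl⟩
    calc sInf T ≤ sSup {r : ℝ | ∃ y ∈ ΩA.Dball 1,
          r = sInf {s | ∃ x ∈ Set.range γ.anchors, s = ΩA.mkD x y}} :=
        le_csSup hbdd hmem2
      _ ≤ hausDist ΩA.mkD (Set.range γ.anchors) (ΩA.Dball 1) := le_max_right _ _
      _ ≤ γ.imprint := le_max_left _ _
  obtain ⟨s, hsT, hslt⟩ := exists_lt_of_csInf_lt hTne
    (hTinf_le.trans_lt (lt_add_of_pos_right _ hε))
  obtain ⟨x, ⟨j, rfl⟩, rfl⟩ := hsT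
  -- the candidate
  refine ⟨((l : ℝ) : ℂ) • γ.coanchors j, ΩB.Ddom_smul _ _ (γ.coanchors_mem j), ?_, ?_⟩
  · rw [ΩB.D_smul _ _ (γ.coanchors_mem j), Complex.norm_real, Real.norm_eq_abs,
      abs_of_pos hl0]
    calc l * ΩB.D (γ.coanchors j) ≤ l * 1 :=
        mul_le_mul_of_nonneg_left (γ.coanchors_le j) hl0.le
      _ = l := mul_one _
  · rw [γ.dn_eq]
    have hreach : γ.modularReach + γ.imprint ≤ γ.reach := le_max_right _ _
    refine ciSup_le fun k => ?_
    have ha₁ : ‖ΩA.inn ω (γ.anchors k) - ΩA.inn (((l : ℝ) : ℂ) • γ.anchors j) (γ.anchors k)‖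
        ≤ l * (γ.imprint + ε) := by
      have heq : ΩA.inn ω (γ.anchors k) - ΩA.inn (((l : ℝ) : ℂ) • γ.anchors j) (γ.anchors k)
          = ((l : ℝ) : ℂ) • (ΩA.inn ω' (γ.anchors k) - ΩA.inn (γ.anchors j) (γ.anchors k)) := by
        rw [smul_sub, ← ΩA.inn_smul_leftC, ← ΩA.inn_smul_leftC, hωeq]
      rw [heq, norm_smul, Complex.norm_real, Real.norm_eq_abs, abs_of_pos hl0,
        norm_sub_rev]
      refine mul_le_mul_of_nonneg_left ?_ hl0.le
      refine (ΩA.le_mkD (γ.anchors j) ω' (γ.anchors k) (γ.anchors_mem k)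
        (γ.anchors_le k)).trans hslt.le
    have hbnj : γ.bn (ΩA.inn (((l : ℝ) : ℂ) • γ.anchors j) (γ.anchors k))
          (ΩB.inn (((l : ℝ) : ℂ) • γ.coanchors j) (γ.coanchors k))
        ≤ l * γ.modularReach := by
      rw [ΩA.inn_smul_leftC, ΩB.inn_smul_leftC, γ.bn_smul l hl0.le]
      refine mul_le_mul_of_nonneg_left ?_ hl0.le
      exact le_trans (le_max_left _ _) ((γ.term_le_dn _ _ k).trans (γ.dn_anchor_le_mr j))
    have hbnj' : γ.bn (ΩA.inn (γ.anchors k) (((l : ℝ) : ℂ) • γ.anchors j))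
          (ΩB.inn (γ.coanchors k) (((l : ℝ) : ℂ) • γ.coanchors j))
        ≤ l * γ.modularReach := by
      rw [ΩA.inn_smulC_right, ΩB.inn_smulC_right, Complex.conj_ofReal,
        γ.bn_smul l hl0.le]
      refine mul_le_mul_of_nonneg_left ?_ hl0.le
      exact le_trans (le_max_right _ _) ((γ.term_le_dn _ _ k).trans (γ.dn_anchor_le_mr j))
    refine max_le ?_ ?_
    · have hsplit : ΩA.inn ω (γ.anchors k)
          = (ΩA.inn ω (γ.anchors k) - ΩA.inn (((l : ℝ) : ℂ) • γ.anchors j) (γ.anchors k))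
            + ΩA.inn (((l : ℝ) : ℂ) • γ.anchors j) (γ.anchors k) := (sub_add_cancel _ _).symm
      rw [hsplit]
      refine (γ.bn_add_left _ _ _).trans ?_
      have := add_le_add ha₁ hbnj
      refine this.trans ?_
      have h3 := mul_le_mul_of_nonneg_left hreach hl0.le
      nlinarith
    · have hsplit : ΩA.inn (γ.anchors k) ω
          = (ΩA.inn (γ.anchors k) ω - ΩA.inn (γ.anchors k) (((l : ℝ) : ℂ) • γ.anchors j))
            + ΩA.inn (γ.anchors k) (((l : ℝ) : ℂ) • γ.anchors j) := (sub_add_cancel _ _).symm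
      have hb₁ : ‖ΩA.inn (γ.anchors k) ω - ΩA.inn (γ.anchors k) (((l : ℝ) : ℂ) • γ.anchors j)‖
          ≤ l * (γ.imprint + ε) := by
        have heq2 : ΩA.inn (γ.anchors k) ω - ΩA.inn (γ.anchors k) (((l : ℝ) : ℂ) • γ.anchors j)
            = star (ΩA.inn ω (γ.anchors k)
                - ΩA.inn (((l : ℝ) : ℂ) • γ.anchors j) (γ.anchors k)) := by
          rw [star_sub, ΩA.inn_star, ΩA.inn_star]
        rw [heq2, norm_star]
        exact ha₁
      rw [hsplit]
      refine (γ.bn_add_left _ _ _).trans ?_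
      have := add_le_add hb₁ hbnj'
      refine this.trans ?_
      have h3 := mul_le_mul_of_nonneg_left hreach hl0.le
      nlinarith

end ModularBridge

end Statement6Bridge

/-- for any `ω ∈ dom(D_M)` and `l ≥ D_M(ω)`, the `l`-modular target set
`t_γ(ω|l)` is nonempty and compact for the C*-Hilbert norm of `N`. -/
theorem statement6 {F : ℝ → ℝ → ℝ → ℝ → ℝ} {G : ℝ → ℝ → ℝ → ℝ} {H : ℝ → ℝ → ℝ}
    (hFGH : AdmissibleTriple F G H)
    {ΩA ΩB : BundledMQVB F G H} (γ : ModularBridge ΩA ΩB)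
    (ω : ΩA.M) (hω : ω ∈ ΩA.Ddom) (l : ℝ) (hl : ΩA.D ω ≤ l) :
    (γ.mtarget ω l).Nonempty ∧ IsCompact (γ.mtarget ω l) := by
  have hl0 : (0 : ℝ) ≤ l := (ΩA.D_nonneg ω).trans hl
  rcases hl0.eq_or_lt with hzero | hpos
  · -- the degenerate case `l = 0`
    subst hzero
    have hω0 : ω = 0 := by
      have h1 : ‖ω‖ ≤ 0 := (ΩA.norm_le_D ω hω).trans hl
      exact norm_eq_zero.mp (le_antisymm h1 (norm_nonneg ω))
    constructor
    · refine ⟨0, ΩB.zero_mem_Ddom, ?_, ?_⟩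
      · rw [ΩB.D_zero]
      · rw [hω0, zero_mul, γ.dn_eq]
        refine ciSup_le fun k => ?_
        have hbn0 : γ.bn (0 : ΩA.A) (0 : ΩB.A) = 0 := by
          rw [γ.bn_def]; simp
        rw [ΩA.inn_zero_left, ΩB.inn_zero_left, ΩA.inn_zero_right, ΩB.inn_zero_right,
          hbn0]
        simp
    · have hsub : γ.mtarget ω 0 ⊆ {0} := by
        rintro η ⟨hmem, hD, -⟩
        have h1 : ‖η‖ ≤ 0 := (ΩB.norm_le_D η hmem).trans hD
        exact Set.mem_singleton_iff.mpr
          (norm_eq_zero.mp (le_antisymm h1 (norm_nonneg η)))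
      exact ((Set.finite_singleton 0).subset hsub).isCompact
  · -- the main case `0 < l`
    have hclosed := γ.dn_closed ω (l * γ.reach)
    have hcomp1 : IsCompact (ΩB.Dball l) := ΩB.Dball_compact hpos
    have hmt : γ.mtarget ω l = ΩB.Dball l ∩ {η | γ.dn ω η ≤ l * γ.reach} := by
      ext η
      simp only [ModularBridge.mtarget, BundledMQVB.Dball, Set.mem_setOf_eq,
        Set.mem_inter_iff]
      tauto
    constructor
    · set K : ℕ → Set ΩB.M := fun n =>
        ΩB.Dball l ∩ {η | γ.dn ω η ≤ l * γ.reach + l * (1 / ((n : ℝ) + 1))} with hK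
      have hKne : ∀ n, (K n).Nonempty := by
        intro n
        obtain ⟨η, hmem, hD, hdn⟩ := γ.approx ω hω hpos hl
          (show (0 : ℝ) < 1 / ((n : ℝ) + 1) by positivity)
        exact ⟨η, ⟨hmem, hD⟩, hdn⟩
      have hKc : ∀ n, IsCompact (K n) := fun n =>
        hcomp1.inter_right (γ.dn_closed ω _)
      have hanti : ∀ n, K (n + 1) ⊆ K n := by
        rintro n η ⟨h1, h2⟩
        refine ⟨h1, ?_⟩
        have h2' : γ.dn ω η ≤ l * γ.reach + l * (1 / ((n : ℝ) + 1 + 1)) := by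
          have := h2
          simp only [Set.mem_setOf_eq] at this
          push_cast at this
          linarith
        have hstep : l * (1 / ((n : ℝ) + 1 + 1)) ≤ l * (1 / ((n : ℝ) + 1)) :=
          mul_le_mul_of_nonneg_left
            (one_div_le_one_div_of_le (by positivity) (by linarith)) hpos.le
        exact Set.mem_setOf_eq ▸ (by linarith : γ.dn ω η ≤ l * γ.reach + l * (1 / ((n : ℝ) + 1)))
      obtain ⟨η, hη⟩ := IsCompact.nonempty_iInter_of_sequence_nonempty_isCompact_isClosed
        K hanti hKne (hKc 0) (fun n => (hKc n).isClosed)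
      have hηn : ∀ n : ℕ, η ∈ K n := Set.mem_iInter.mp hη
      have hmemD : η ∈ ΩB.Dball l := (hηn 0).1
      refine ⟨η, hmemD.1, hmemD.2, ?_⟩
      by_contra hcon
      push_neg at hcon
      obtain ⟨n, hn⟩ := exists_nat_one_div_lt
        (show (0 : ℝ) < (γ.dn ω η - l * γ.reach) / l from
          div_pos (by linarith) hpos)
      have h2 : γ.dn ω η ≤ l * γ.reach + l * (1 / ((n : ℝ) + 1)) := (hηn n).2
      have h4 : l * (1 / ((n : ℝ) + 1)) < γ.dn ω η - l * γ.reach := by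
        rw [mul_comm]
        exact (lt_div_iff₀ hpos).mp hn
      linarith
    · rw [hmt]
      exact hcomp1.inter_right hclosed
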